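/- Let f : X → S¹ be a locally injective continuous map from a connected compact Hausdorff space X onto the circle S¹. Then X is metrizable. -/
import Mathlib


/-- A locally injective continuous surjection from a continuum onto the
circle S¹ forces the domain to be metrizable. -/
theorem stmt6 {X : Type*} [TopologicalSpace X] [CompactSpace X] [T2Space X]
    [ConnectedSpace X] (f : X → Metric.sphere (0 : ℂ) 1) (hf : Continuous f)
    (hsurj : Function.Surjective f)
    (hli : ∀ x : X, ∃ O : Set X, IsOpen O ∧ x ∈ O ∧ Set.InjOn f O) :
    TopologicalSpace.MetrizableSpace X := by
  choose O hOopen hOmem hOinj using hli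
  obtain ⟨t, ht⟩ := IsCompact.elim_finite_subcover (isCompact_univ (X := X)) O hOopen
    (fun x _ => Set.mem_iUnion.2 ⟨x, hOmem x⟩)
  obtain ⟨ρ, hρ⟩ := PartitionOfUnity.exists_isSubordinate (s := Set.univ) isClosed_univ
    (fun i : t => O i) (fun i => hOopen i)
    (by
      intro x _
      rcases Set.mem_iUnion₂.1 (ht (Set.mem_univ x)) with ⟨i, hi, hxi⟩
      exact Set.mem_iUnion.2 ⟨⟨i, hi⟩, hxi⟩)
  set Φ : X → (Metric.sphere (0 : ℂ) 1) × (t → ℝ) := fun x => (f x, fun i => ρ i x) with hΦ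
  have hΦcont : Continuous Φ :=
    hf.prodMk (continuous_pi fun i => (ρ i).continuous)
  have hΦinj : Function.Injective Φ := by
    intro x y hxy
    have h1 : f x = f y := congrArg Prod.fst hxy
    have h2 : ∀ i : t, ρ i x = ρ i y := fun i => congrFun (congrArg Prod.snd hxy) i
    obtain ⟨i, hi⟩ : ∃ i : t, ρ i x ≠ 0 := by
      by_contra h
      push_neg at h
      have := ρ.sum_eq_one (Set.mem_univ x)
      simp only [h] at this
      simpa using this
    have hipos : 0 < ρ i x := lt_of_le_of_ne (ρ.nonneg i x) (Ne.symm hi)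
    have hx : x ∈ O i := hρ i (subset_tsupport _ (by simpa using hi))
    have hy : y ∈ O i := hρ i (subset_tsupport _ (by
      simp only [Function.mem_support]
      rw [← h2 i]; exact hi))
    exact hOinj i hx hy h1
  exact (hΦcont.isClosedEmbedding hΦinj).toIsEmbedding.metrizableSpace
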